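/- Let R be a Noetherian ring, I an ideal, and W a multiplicative set. Then the inner integral closure of the ideal I·W⁻¹R in W⁻¹R equals the expansion to W⁻¹R of the inner integral closure of I in R. -/

import Mathlib

/-- The integral closure of an ideal `I`: elements `x` satisfying a monic equation
`x^d + a 1 * x^(d-1) + ... + a d = 0` with `a j ∈ I^j` for `1 ≤ j ≤ d`. -/
def Ideal.intClosure {R : Type*} [CommRing R] (I : Ideal R) : Set R :=
  {x | ∃ (d : ℕ) (a : ℕ → R), 0 < d ∧ (∀ j, 1 ≤ j → j ≤ d → a j ∈ I ^ j) ∧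
    x ^ d + ∑ j ∈ Finset.Icc 1 d, a j * x ^ (d - j) = 0}

/-- The inner integral closure of an ideal `I`:
`{ r | ∃ n ≥ 1, r ^ n ∈ integral closure of I ^ (n+1) }`. -/
def Ideal.innerIntClosure {R : Type*} [CommRing R] (I : Ideal R) : Set R :=
  {r | ∃ n : ℕ, 1 ≤ n ∧ r ^ n ∈ (I ^ (n + 1)).intClosure}

open Polynomial Finset

namespace Ideal
variable {R : Type*} [CommRing R]

lemma mem_intClosure_self {J : Ideal R} {x : R} (hx : x ∈ J) : x ∈ J.intClosure := by
  refine ⟨1, fun _ => -x, one_pos, ?_, ?_⟩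
  · intro j h1 h2
    have : j = 1 := le_antisymm h2 h1
    subst this; simpa using neg_mem hx
  · simp

lemma intClosure_mono {J K : Ideal R} (h : J ≤ K) : J.intClosure ⊆ K.intClosure := by
  rintro x ⟨d, a, hd, ha, heq⟩
  exact ⟨d, a, hd, fun j h1 h2 => Ideal.pow_right_mono h j (ha j h1 h2), heq⟩

/-- Forward: membership in the integral closure of `I^k` gives integrality of
`C z * X ^ k` over the Rees algebra of `I`. -/
lemma intClosure_isIntegral (I : Ideal R) (k : ℕ) {z : R}
    (hz : z ∈ (I ^ k).intClosure) :
    IsIntegral (reesAlgebra I) ((C z) * X ^ k : R[X]) := by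
  obtain ⟨d, a, hd, ha, heq⟩ := hz
  have hmem : ∀ j ∈ Finset.Icc 1 d, (monomial (k * j) (a j) : R[X]) ∈ reesAlgebra I := by
    intro j hj
    rw [Finset.mem_Icc] at hj
    exact reesAlgebra.monomial_mem.mpr (by rw [pow_mul]; exact ha j hj.1 hj.2)
  classical
  set c : ℕ → reesAlgebra I := fun j =>
    if hj : j ∈ Finset.Icc 1 d then ⟨monomial (k * j) (a j), hmem j hj⟩ else 0 with hc
  refine ⟨X ^ d + ∑ j ∈ Finset.Icc 1 d, Polynomial.C (c j) * X ^ (d - j), ?_, ?_⟩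
  · apply monic_X_pow_add
    refine lt_of_le_of_lt (degree_sum_le _ _) ?_
    rw [Finset.sup_lt_iff (by exact_mod_cast WithBot.bot_lt_coe d)]
    intro j hj
    refine lt_of_le_of_lt (degree_C_mul_X_pow_le _ _) ?_
    rw [Finset.mem_Icc] at hj
    exact_mod_cast Nat.sub_lt_of_pos_le hj.1 hj.2
  · have hCX : ∀ e : ℕ, ((C z * X ^ k : R[X]) ^ e) = monomial (k * e) (z ^ e) := by
      intro e
      rw [mul_pow, ← C_pow, ← pow_mul, C_mul_X_pow_eq_monomial]
    simp only [eval₂_add, eval₂_pow, eval₂_X, eval₂_finset_sum, eval₂_mul, eval₂_C]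
    have hterm : ∀ j ∈ Finset.Icc 1 d,
        algebraMap (reesAlgebra I) R[X] (c j) * (C z * X ^ k) ^ (d - j)
          = monomial (k * d) (a j * z ^ (d - j)) := by
      intro j hj
      have hj' := Finset.mem_Icc.mp hj
      have : algebraMap (reesAlgebra I) R[X] (c j) = monomial (k * j) (a j) := by
        simp only [hc, dif_pos hj, Subalgebra.algebraMap_eq, RingHom.comp_apply,
          Subalgebra.coe_val, RingHom.coe_coe, Subalgebra.coe_algebraMap]
        simp
      rw [this, hCX, monomial_mul_monomial]
      congr 1
      rw [← Nat.mul_add, Nat.add_sub_cancel' hj'.2]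
    rw [Finset.sum_congr rfl hterm, hCX]
    rw [← map_sum (monomial (k * d)) (fun j => a j * z ^ (d - j)) (Finset.Icc 1 d),
      ← map_add (monomial (k * d)), heq, monomial_zero_right]

/-- Backward: integrality of `C z * X ^ k` over the Rees algebra gives membership in the
integral closure of `I ^ k`. -/
lemma isIntegral_mem_intClosure (I : Ideal R) {k : ℕ} {z : R}
    (hz : IsIntegral (reesAlgebra I) ((C z) * X ^ k : R[X])) :
    z ∈ (I ^ k).intClosure := by
  rcases subsingleton_or_nontrivial R with hR | hR
  · exact ⟨1, fun _ => 0, one_pos, fun j _ _ => Submodule.zero_mem _, Subsingleton.elim _ _⟩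
  obtain ⟨q, hq, heq⟩ := hz
  set D := q.natDegree with hD
  rcases Nat.eq_zero_or_pos D with h0 | hD1
  · exfalso
    have hqd : q.natDegree = 0 := by rw [← hD, h0]
    have : q = 1 := by
      have h1 := Polynomial.eq_C_of_natDegree_eq_zero hqd
      have h2 : q.coeff 0 = 1 := by
        have := hq.coeff_natDegree
        rwa [hqd] at this
      rw [h1, h2, map_one]
    rw [this, eval₂_one] at heq
    exact one_ne_zero heq
  rw [Polynomial.eval₂_eq_sum_range] at heq
  set g : ℕ → R := fun i => ((q.coeff i : R[X])).coeff (k * (D - i)) with hg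
  have hco := congrArg (fun P : R[X] => P.coeff (k * D)) heq
  simp only [Polynomial.finset_sum_coeff, Polynomial.coeff_zero] at hco
  have hterm : ∀ i ∈ Finset.range (D + 1),
      (algebraMap (reesAlgebra I) R[X] (q.coeff i) * (C z * X ^ k) ^ i).coeff (k * D)
        = g i * z ^ i := by
    intro i hi
    have hiD : i ≤ D := Nat.lt_succ_iff.mp (Finset.mem_range.mp hi)
    have h1 : ((C z * X ^ k : R[X]) ^ i) = monomial (k * i) (z ^ i) := by
      rw [mul_pow, ← C_pow, ← pow_mul, C_mul_X_pow_eq_monomial]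
    have h2 : algebraMap (reesAlgebra I) R[X] (q.coeff i) = ((q.coeff i : R[X])) := by
      simp [Subalgebra.algebraMap_eq]
    rw [h1, h2, show k * D = k * (D - i) + k * i by
      rw [← Nat.mul_add, Nat.sub_add_cancel hiD], Polynomial.coeff_mul_monomial]
  rw [Finset.sum_congr rfl hterm, Finset.sum_range_succ] at hco
  have hgD : g D * z ^ D = z ^ D := by
    have h2 : q.coeff D = 1 := hq.coeff_natDegree
    simp [hg, h2]
  rw [hgD] at hco
  refine ⟨D, fun j => g (D - j), hD1, ?_, ?_⟩
  · intro j h1 h2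
    show g (D - j) ∈ (I ^ k) ^ j
    have hgj : g (D - j) = ((q.coeff (D - j) : R[X])).coeff (k * j) := by
      rw [hg]
      simp only [Nat.sub_sub_self h2]
    rw [hgj, ← pow_mul]
    exact (mem_reesAlgebra_iff I _).mp (q.coeff (D - j)).2 (k * j)
  · have hsum : ∑ j ∈ Finset.Icc 1 D, g (D - j) * z ^ (D - j)
        = ∑ i ∈ Finset.range D, g i * z ^ i := by
      refine Finset.sum_nbij' (fun j => D - j) (fun i => D - i) ?_ ?_ ?_ ?_ ?_ <;>
        intro a ha <;> simp only [Finset.mem_Icc, Finset.mem_range] at * <;> omega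
    rw [hsum]
    linear_combination hco

lemma const_isIntegral (I : Ideal R) (r : R) : IsIntegral (reesAlgebra I) (C r : R[X]) := by
  have hmem : (C r : R[X]) ∈ reesAlgebra I := by
    rw [mem_reesAlgebra_iff]
    intro i
    rcases Nat.eq_zero_or_pos i with h | h
    · subst h; simp
    · rw [coeff_C, if_neg (by omega)]; exact Submodule.zero_mem _
  have := isIntegral_algebraMap (R := reesAlgebra I) (A := R[X])
    (x := (⟨C r, hmem⟩ : reesAlgebra I))
  simpa [Subalgebra.algebraMap_eq] using this

lemma add_mem_intClosure_pow {I : Ideal R} {k : ℕ} {z w : R}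
    (hz : z ∈ (I ^ k).intClosure) (hw : w ∈ (I ^ k).intClosure) :
    z + w ∈ (I ^ k).intClosure := by
  apply isIntegral_mem_intClosure
  have h := (intClosure_isIntegral I k hz).add (intClosure_isIntegral I k hw)
  have e : (C (z + w) * X ^ k : R[X]) = C z * X ^ k + C w * X ^ k := by
    rw [C_add, add_mul]
  rwa [e]

lemma smul_mem_intClosure_pow {I : Ideal R} {k : ℕ} (r : R) {z : R}
    (hz : z ∈ (I ^ k).intClosure) : r * z ∈ (I ^ k).intClosure := by
  apply isIntegral_mem_intClosure
  have h := (const_isIntegral I r).mul (intClosure_isIntegral I k hz)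
  have e : (C (r * z) * X ^ k : R[X]) = C r * (C z * X ^ k) := by
    rw [C_mul, mul_assoc]
  rwa [e]

lemma zero_mem_intClosure (J : Ideal R) : (0 : R) ∈ J.intClosure :=
  mem_intClosure_self (Submodule.zero_mem J)

lemma sum_mem_intClosure_pow {I : Ideal R} {k : ℕ} {ι : Type*} {s : Finset ι} {f : ι → R}
    (h : ∀ i ∈ s, f i ∈ (I ^ k).intClosure) : (∑ i ∈ s, f i) ∈ (I ^ k).intClosure := by
  classical
  induction s using Finset.induction_on with
  | empty => simpa using zero_mem_intClosure (I ^ k)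
  | insert _ _ hx ih =>
    rw [Finset.sum_insert hx]
    exact add_mem_intClosure_pow (h _ (Finset.mem_insert_self _ _))
      (ih fun i hi => h i (Finset.mem_insert_of_mem hi))

lemma arith_key {n m i N : ℕ} (hn : 1 ≤ n) (hm : 1 ≤ m) (hN : N = (n + m) * (n + m + 1))
    (hi : i ≤ N) : N + 1 ≤ (n + 1) * (i / n) + (m + 1) * ((N - i) / m) := by
  set q := i / n with hq
  set r := (N - i) / m with hr
  have e1 : n * q + i % n = i := Nat.div_add_mod i n
  have e2 : m * r + (N - i) % m = N - i := Nat.div_add_mod (N - i) m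
  have e3 : i % n < n := Nat.mod_lt _ (by omega)
  have e4 : (N - i) % m < m := Nat.mod_lt _ (by omega)
  have e5 : N - i + i = N := Nat.sub_add_cancel hi
  have e6 : n * q ≤ (n + m) * q := mul_le_mul_left (by omega) q
  have e7 : m * r ≤ (n + m) * r := mul_le_mul_left (by omega) r
  have e8 : N + 2 ≤ n * q + m * r + n + m := by linarith
  have eN : N = (n + m) * (n + m) + (n + m) := by rw [hN]; ring
  have e9 : (n + m) * (n + m) + 2 ≤ (n + m) * (q + r) := by
    rw [Nat.mul_add]
    linarith
  have e10 : n + m + 1 ≤ q + r := by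
    by_contra hcon
    push_neg at hcon
    have : (n + m) * (q + r) ≤ (n + m) * (n + m) := Nat.mul_le_mul_left _ (by omega)
    linarith
  have expand1 : (n + 1) * q = n * q + q := by ring
  have expand2 : (m + 1) * r = m * r + r := by ring
  linarith

lemma term_mem {I : Ideal R} {x y : R} {n m : ℕ} (hn : 1 ≤ n) (hm : 1 ≤ m)
    (hx : x ^ n ∈ (I ^ (n + 1)).intClosure) (hy : y ^ m ∈ (I ^ (m + 1)).intClosure)
    {N i : ℕ} (hN : N = (n + m) * (n + m + 1)) (hi : i ≤ N) :
    x ^ i * y ^ (N - i) ∈ (I ^ (N + 1)).intClosure := by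
  set q := i / n with hq
  set r := (N - i) / m with hr
  have hK := arith_key hn hm hN hi
  set K := (n + 1) * q + (m + 1) * r with hKd
  have h1 := (intClosure_isIntegral I (n + 1) hx).pow q
  have h2 := (intClosure_isIntegral I (m + 1) hy).pow r
  have h3 := const_isIntegral I (x ^ (i % n) * y ^ ((N - i) % m))
  have h4 := (h1.mul h2).mul h3
  have e1 : n * q + i % n = i := by rw [hq]; exact Nat.div_add_mod i n
  have e2 : m * r + (N - i) % m = N - i := by rw [hr]; exact Nat.div_add_mod (N - i) m
  rw [C_mul_X_pow_eq_monomial, C_mul_X_pow_eq_monomial, ← monomial_zero_left,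
    monomial_pow, monomial_pow, monomial_mul_monomial, monomial_mul_monomial] at h4
  have e : (C (x ^ i * y ^ (N - i)) * X ^ K : R[X])
      = monomial ((n + 1) * q + (m + 1) * r + 0)
          ((x ^ n) ^ q * (y ^ m) ^ r * (x ^ (i % n) * y ^ ((N - i) % m))) := by
    rw [C_mul_X_pow_eq_monomial]
    congr 1
    rw [← pow_mul, ← pow_mul,
      show x ^ i = x ^ (n * q + i % n) by rw [e1],
      show y ^ (N - i) = y ^ (m * r + (N - i) % m) by rw [e2],
      pow_add, pow_add]
    ring
  rw [← e] at h4
  have h5 := isIntegral_mem_intClosure I h4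
  exact intClosure_mono (Ideal.pow_le_pow_right hK) h5

lemma inner_zero (I : Ideal R) : (0 : R) ∈ I.innerIntClosure :=
  ⟨1, le_refl 1, by simpa using zero_mem_intClosure (I ^ 2)⟩

lemma inner_smul (I : Ideal R) (s : R) {x : R} (hx : x ∈ I.innerIntClosure) :
    s * x ∈ I.innerIntClosure := by
  obtain ⟨n, hn, h⟩ := hx
  exact ⟨n, hn, by rw [mul_pow]; exact smul_mem_intClosure_pow _ h⟩

lemma inner_add (I : Ideal R) {x y : R} (hx : x ∈ I.innerIntClosure)
    (hy : y ∈ I.innerIntClosure) : x + y ∈ I.innerIntClosure := by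
  obtain ⟨n, hn, hxn⟩ := hx
  obtain ⟨m, hm, hym⟩ := hy
  refine ⟨(n + m) * (n + m + 1), Nat.one_le_iff_ne_zero.mpr (by positivity), ?_⟩
  set N := (n + m) * (n + m + 1) with hNd
  rw [add_pow]
  apply sum_mem_intClosure_pow
  intro i hi
  have hiN : i ≤ N := Nat.lt_succ_iff.mp (Finset.mem_range.mp hi)
  rw [mul_comm]
  exact smul_mem_intClosure_pow _ (term_mem hn hm hxn hym hNd hiN)

lemma intClosure_map {S : Type*} [CommRing S] (f : R →+* S) {J : Ideal R} {z : R}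
    (hz : z ∈ J.intClosure) : f z ∈ (J.map f).intClosure := by
  obtain ⟨d, a, hd, ha, heq⟩ := hz
  refine ⟨d, fun j => f (a j), hd, ?_, ?_⟩
  · intro j h1 h2
    rw [← Ideal.map_pow]
    exact Ideal.mem_map_of_mem f (ha j h1 h2)
  · have h := congrArg f heq
    simpa [map_add, map_pow, map_sum, map_mul] using h

lemma descent {S : Type*} [CommRing S] [Algebra R S] (W : Submonoid R) [IsLocalization W S]
    (J : Ideal R) {y : S} {r : R} {w : W}
    (hyw : y * algebraMap R S (w : R) = algebraMap R S r)
    (hy : y ∈ (J.map (algebraMap R S)).intClosure) :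
    ∃ t : W, (t : R) * r ∈ J.intClosure := by
  classical
  set φ := algebraMap R S with hφ
  obtain ⟨d, a, hd, ha, heq⟩ := hy
  have hchoice : ∀ j : ℕ, ∃ (b : R) (v : W), a j * φ (v : R) = φ b ∧
      (j ∈ Finset.Icc 1 d → b ∈ J ^ j) := by
    intro j
    by_cases hj : j ∈ Finset.Icc 1 d
    · have hmem : a j ∈ Ideal.map φ (J ^ j) := by
        rw [Ideal.map_pow]
        exact ha j (Finset.mem_Icc.mp hj).1 (Finset.mem_Icc.mp hj).2
      obtain ⟨⟨b, v⟩, hbv⟩ := (IsLocalization.mem_map_algebraMap_iff W S).mp hmem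
      exact ⟨(b : R), v, hbv, fun _ => b.2⟩
    · obtain ⟨⟨b, v⟩, hbv⟩ := IsLocalization.surj W (a j)
      exact ⟨b, v, hbv, fun h => absurd h hj⟩
  choose b v hv hb using hchoice
  set vR : R := ∏ j ∈ Finset.Icc 1 d, (v j : R) with hvR
  have hvRW : vR ∈ W := Submonoid.prod_mem W (fun j _ => (v j).2)
  set c : ℕ → R := fun j => b j * ∏ k ∈ (Finset.Icc 1 d).erase j, (v k : R) with hc
  have hcJ : ∀ j, 1 ≤ j → j ≤ d → c j ∈ J ^ j := fun j h1 h2 =>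
    Ideal.mul_mem_right _ _ (hb j (Finset.mem_Icc.mpr ⟨h1, h2⟩))
  set G : R := vR * r ^ d + ∑ j ∈ Finset.Icc 1 d, c j * (w : R) ^ j * r ^ (d - j) with hG
  have hφG : φ G = 0 := by
    have key : φ G = (y ^ d + ∑ j ∈ Finset.Icc 1 d, a j * y ^ (d - j)) * φ (w : R) ^ d * φ vR := by
      rw [hG, map_add, _root_.map_mul, map_sum, _root_.map_pow, add_mul, add_mul,
        Finset.sum_mul, Finset.sum_mul]
      congr 1
      · rw [show φ r = y * φ (w : R) from hyw.symm, mul_pow]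
        ring
      · apply Finset.sum_congr rfl
        intro j hj
        rw [_root_.map_mul, _root_.map_mul, _root_.map_pow, _root_.map_pow]
        have hφc : φ (c j) = a j * φ (v j : R)
            * φ (∏ k ∈ (Finset.Icc 1 d).erase j, (v k : R)) := by
          rw [hc]
          simp only []
          rw [_root_.map_mul, ← hv j]
        have hvsplit : φ vR = φ (v j : R)
            * φ (∏ k ∈ (Finset.Icc 1 d).erase j, (v k : R)) := by
          rw [hvR, ← _root_.map_mul]
          exact congrArg φ (Finset.mul_prod_erase _ _ hj).symm
        have hrd : φ r ^ (d - j) = y ^ (d - j) * φ (w : R) ^ (d - j) := by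
          rw [show φ r = y * φ (w : R) from hyw.symm, mul_pow]
        have hwd : (φ (w : R)) ^ j * (φ (w : R)) ^ (d - j) = φ (w : R) ^ d := by
          rw [← pow_add]
          congr 1
          have := (Finset.mem_Icc.mp hj).2
          omega
        rw [hφc, hrd, hvsplit, ← hwd]
        ring
    rw [key, heq, zero_mul, zero_mul]
  obtain ⟨u, hu⟩ := (IsLocalization.map_eq_zero_iff W S G).mp hφG
  refine ⟨u * ⟨vR, hvRW⟩, ?_⟩
  have hz : ((u * ⟨vR, hvRW⟩ : W) : R) * r = (u : R) * vR * r := by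
    push_cast
    ring
  rw [hz]
  set z : R := (u : R) * vR * r with hzd
  set e : ℕ → R := fun j => (u : R) ^ j * vR ^ (j - 1) * c j * (w : R) ^ j with he
  refine ⟨d, e, hd, ?_, ?_⟩
  · intro j h1 h2
    exact Ideal.mul_mem_right _ _ (Ideal.mul_mem_left _ _ (hcJ j h1 h2))
  · obtain ⟨k, rfl⟩ : ∃ k, d = k + 1 := ⟨d - 1, by omega⟩
    have main : z ^ (k + 1) + ∑ j ∈ Finset.Icc 1 (k + 1), e j * z ^ (k + 1 - j)
        = (u : R) ^ k * vR ^ k * ((u : R) * G) := by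
      rw [hG, mul_add, Finset.mul_sum, mul_add, Finset.mul_sum]
      congr 1
      · rw [hzd]
        ring
      · apply Finset.sum_congr rfl
        intro j hj
        obtain ⟨h1, h2⟩ := Finset.mem_Icc.mp hj
        obtain ⟨p, rfl⟩ : ∃ p, j = p + 1 := ⟨j - 1, by omega⟩
        obtain ⟨l, rfl⟩ : ∃ l, k = p + l := ⟨k - p, by omega⟩
        have hsub : p + l + 1 - (p + 1) = l := by omega
        have hsub2 : p + 1 - 1 = p := by omega
        rw [he]
        simp only []
        rw [hsub, hsub2, hzd]
        ring
    rw [main, hu, mul_zero]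

lemma inner_map {S : Type*} [CommRing S] [Algebra R S] (I : Ideal R) {z : R}
    (hz : z ∈ I.innerIntClosure) :
    algebraMap R S z ∈ (I.map (algebraMap R S)).innerIntClosure := by
  obtain ⟨n, hn, h⟩ := hz
  refine ⟨n, hn, ?_⟩
  rw [← map_pow, ← Ideal.map_pow]
  exact intClosure_map _ h

end Ideal

/-- Inner integral closure commutes with localization: the inner integral closure of
`I·W⁻¹R` equals the expansion to `W⁻¹R` of the inner integral closure of `I`. -/
theorem stmt4 {R : Type*} [CommRing R] [IsNoetherianRing R] (I : Ideal R)
    (W : Submonoid R) :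
    (Ideal.map (algebraMap R (Localization W)) I).innerIntClosure =
      ↑(Ideal.map (algebraMap R (Localization W)) (Ideal.span I.innerIntClosure)) := by
  set φ := algebraMap R (Localization W) with hφ
  ext x
  simp only [SetLike.mem_coe]
  constructor
  · rintro ⟨n, hn, hxn⟩
    rw [← Ideal.map_pow] at hxn
    obtain ⟨⟨r, w⟩, hrw⟩ := IsLocalization.surj W x
    have hxw : x ^ n * φ (((⟨(w : R) ^ n, pow_mem w.2 n⟩ : W) : R)) = φ (r ^ n) := by
      show x ^ n * φ ((w : R) ^ n) = φ (r ^ n)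
      rw [map_pow, map_pow, ← mul_pow, hrw]
    obtain ⟨t, ht⟩ := Ideal.descent W (I ^ (n + 1)) hxw hxn
    have htr : ((t : R) * r) ^ n ∈ (I ^ (n + 1)).intClosure := by
      have hee : ((t : R) * r) ^ n = (t : R) ^ (n - 1) * ((t : R) * r ^ n) := by
        obtain ⟨p, rfl⟩ : ∃ p, n = p + 1 := ⟨n - 1, by omega⟩
        simp only [Nat.add_sub_cancel]
        ring
      rw [hee]
      exact Ideal.smul_mem_intClosure_pow _ ht
    have hmem : (t : R) * r ∈ I.innerIntClosure := ⟨n, hn, htr⟩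
    obtain ⟨uu, huu⟩ := IsLocalization.map_units (M := W) (Localization W) (t * w)
    rw [← hφ] at hrw huu
    have hx2 : x * ((uu : Localization W)) = φ ((t : R) * r) := by
      rw [huu, Submonoid.coe_mul, _root_.map_mul, _root_.map_mul]
      calc x * (φ (t : R) * φ (w : R)) = φ (t : R) * (x * φ (w : R)) := by ring
        _ = φ (t : R) * φ r := by rw [hrw]
    have hx3 : x = φ ((t : R) * r) * ↑uu⁻¹ := by
      rw [← hx2]
      exact (Units.mul_inv_cancel_right x uu).symm
    rw [hx3]
    exact Ideal.mul_mem_right _ _ (Ideal.mem_map_of_mem φ (Ideal.subset_span hmem))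
  · intro hx
    rw [Ideal.map_span] at hx
    refine Submodule.span_induction ?_ ?_ ?_ ?_ hx
    · rintro z ⟨y, hy, rfl⟩
      exact Ideal.inner_map I hy
    · exact Ideal.inner_zero _
    · intro a b _ _ ha hb
      exact Ideal.inner_add _ ha hb
    · intro s a _ ha
      rw [smul_eq_mul]
      exact Ideal.inner_smul _ s ha
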